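/- For positive semidefinite operators P, Q on C^n, the fidelity satisfies F(P,Q) = inf over positive definite Y of (1/2)⟨P,Y⟩ + (1/2)⟨Q,Y⁻¹⟩, where ⟨A,B⟩ = Tr(A*B). -/

import Mathlib

open Matrix Kronecker
open scoped ComplexOrder

/-- The old Mathlib `Matrix.PosSemidef.sqrt` (removed upstream), spelled out with its old definition. -/
noncomputable def Matrix.PosSemidef.psdSqrtOld {n : Type*} [Fintype n] [DecidableEq n]
    {A : Matrix n n ℂ} (hA : A.PosSemidef) : Matrix n n ℂ :=
  hA.1.eigenvectorUnitary.1 * diagonal ((↑) ∘ (√·) ∘ hA.1.eigenvalues) *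
    (star hA.1.eigenvectorUnitary : Matrix n n ℂ)

/-- Trace norm `‖A‖₁ = Tr √(Aᴴ A)` of a complex matrix. -/
noncomputable def traceNorm {α β : Type*} [Fintype α] [Fintype β] [DecidableEq α] [DecidableEq β]
    (A : Matrix α β ℂ) : ℝ :=
  ((Matrix.PosSemidef.psdSqrtOld (Matrix.posSemidef_conjTranspose_mul_self A)).trace).re

/-- Spectral norm (operator norm w.r.t. Euclidean norms). -/
noncomputable def specNorm {α β : Type*} [Fintype α] [Fintype β] [DecidableEq α] [DecidableEq β]
    (A : Matrix α β ℂ) : ℝ :=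
  ‖LinearMap.toContinuousLinearMap (Matrix.toEuclideanLin A)‖

/-- Frobenius norm. -/
noncomputable def frobNorm {α β : Type*} [Fintype α] [Fintype β]
    (A : Matrix α β ℂ) : ℝ :=
  Real.sqrt ((Aᴴ * A).trace.re)

/-- Positive semidefinite square root (junk value `0` off the PSD cone). -/
noncomputable def msqrt {α : Type*} [Fintype α] [DecidableEq α]
    (P : Matrix α α ℂ) : Matrix α α ℂ :=
  open scoped Classical in
  if h : P.PosSemidef then Matrix.PosSemidef.psdSqrtOld h else 0

/-- Fidelity `F(P,Q) = ‖√P √Q‖₁`. -/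
noncomputable def fid {α : Type*} [Fintype α] [DecidableEq α]
    (P Q : Matrix α α ℂ) : ℝ :=
  traceNorm (msqrt P * msqrt Q)

/-- Partial trace over the second (right) tensor factor. -/
noncomputable def ptraceRight {a b : ℕ} (M : Matrix (Fin a × Fin b) (Fin a × Fin b) ℂ) :
    Matrix (Fin a) (Fin a) ℂ :=
  Matrix.of fun i j => ∑ s : Fin b, M (i, s) (j, s)

/-- Partial trace over the first (left) tensor factor. -/
noncomputable def ptraceLeft {a b : ℕ} (M : Matrix (Fin a × Fin b) (Fin a × Fin b) ℂ) :
    Matrix (Fin b) (Fin b) ℂ :=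
  Matrix.of fun i j => ∑ s : Fin a, M (s, i) (s, j)

/-- `Φ ⊗ id` acting on `L(Cⁿ ⊗ Cᵏ)`. -/
noncomputable def tensorId {n m k : ℕ}
    (Φ : Matrix (Fin n) (Fin n) ℂ → Matrix (Fin m) (Fin m) ℂ)
    (M : Matrix (Fin n × Fin k) (Fin n × Fin k) ℂ) :
    Matrix (Fin m × Fin k) (Fin m × Fin k) ℂ :=
  Matrix.of fun p q => Φ (Matrix.of fun a c => M (a, p.2) (c, q.2)) p.1 q.1

/-- Completely bounded trace norm `¦¦¦Φ¦¦¦₁ = ‖Φ ⊗ id_{L(Cⁿ)}‖₁`. -/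
noncomputable def cbTraceNorm {n m : ℕ}
    (Φ : Matrix (Fin n) (Fin n) ℂ → Matrix (Fin m) (Fin m) ℂ) : ℝ :=
  sSup {c : ℝ | ∃ M : Matrix (Fin n × Fin n) (Fin n × Fin n) ℂ,
    traceNorm M ≤ 1 ∧ c = traceNorm (tensorId Φ M)}

/-- Completely bounded spectral norm of `Ψ : L(Cᵐ) → L(Cⁿ)`, with ancilla `Cⁿ`. -/
noncomputable def cbSpecNorm {m n : ℕ}
    (Ψ : Matrix (Fin m) (Fin m) ℂ → Matrix (Fin n) (Fin n) ℂ) : ℝ :=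
  sSup {c : ℝ | ∃ M : Matrix (Fin m × Fin n) (Fin m × Fin n) ℂ,
    specNorm M ≤ 1 ∧ c = specNorm (tensorId Ψ M)}

/-- Choi–Jamiołkowski representation `J(Φ) = ∑ᵢⱼ Φ(Eᵢⱼ) ⊗ Eᵢⱼ`. -/
noncomputable def choi {n m : ℕ}
    (Φ : Matrix (Fin n) (Fin n) ℂ → Matrix (Fin m) (Fin m) ℂ) :
    Matrix (Fin m × Fin n) (Fin m × Fin n) ℂ :=
  ∑ i : Fin n, ∑ j : Fin n, (Φ (Matrix.single i j 1)) ⊗ₖ (Matrix.single i j 1)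

/-- vec mapping. -/
def vecM {n : ℕ} (A : Matrix (Fin n) (Fin n) ℂ) : Fin n × Fin n → ℂ := fun p => A p.1 p.2

section SqrtAux
open scoped MatrixOrder
variable {ι : Type*} [Fintype ι] [DecidableEq ι]

noncomputable def Matrix.PosSemidef.sqrt {A : Matrix ι ι ℂ} (hA : A.PosSemidef) : Matrix ι ι ℂ :=
  hA.psdSqrtOld

lemma Matrix.PosSemidef.sqrt_eq_cfcSqrt {A : Matrix ι ι ℂ} (hA : A.PosSemidef) :
    hA.sqrt = CFC.sqrt A := by
  rw [CFC.sqrt_eq_cfc, cfc_nnreal_eq_real _ A, hA.1.cfc_eq]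
  simp only [Matrix.PosSemidef.sqrt, Matrix.PosSemidef.psdSqrtOld, IsHermitian.cfc,
    Unitary.conjStarAlgAut_apply]
  congr 3
  funext i
  simp [max_eq_left (hA.eigenvalues_nonneg i)]

lemma Matrix.PosSemidef.posSemidef_sqrt {A : Matrix ι ι ℂ} (hA : A.PosSemidef) :
    hA.sqrt.PosSemidef := by
  rw [hA.sqrt_eq_cfcSqrt]; exact (CFC.sqrt_nonneg A).posSemidef

lemma Matrix.PosSemidef.sqrt_mul_self {A : Matrix ι ι ℂ} (hA : A.PosSemidef) :
    hA.sqrt * hA.sqrt = A := by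
  rw [hA.sqrt_eq_cfcSqrt]; exact CFC.sqrt_mul_sqrt_self A hA.nonneg

lemma Matrix.PosSemidef.eq_sqrt_of_sq_eq {A B : Matrix ι ι ℂ} (hB : B.PosSemidef)
    (hA : A.PosSemidef) (h : B ^ 2 = A) : B = hA.sqrt := by
  rw [hA.sqrt_eq_cfcSqrt, eq_comm, CFC.sqrt_eq_iff A B hA.nonneg hB.nonneg, ← sq, h]

end SqrtAux

set_option linter.unusedSectionVars false
set_option maxHeartbeats 1600000

open scoped InnerProductSpace

section Aux
variable {ι κ : Type*} [Fintype ι] [DecidableEq ι] [Fintype κ] [DecidableEq κ]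

variable {ι κ : Type*} [Fintype ι] [DecidableEq ι] [Fintype κ] [DecidableEq κ]

noncomputable def vecE (A : Matrix ι κ ℂ) : EuclideanSpace ℂ (ι × κ) := WithLp.toLp 2 (fun p : ι × κ => A p.1 p.2)

lemma inner_vecE (A B : Matrix ι κ ℂ) : ⟪vecE A, vecE B⟫_ℂ = (Aᴴ * B).trace := by
  simp only [PiLp.inner_apply, RCLike.inner_apply, vecE, Matrix.trace, Matrix.diag,
    Matrix.mul_apply, Matrix.conjTranspose_apply]
  rw [Fintype.sum_prod_type, Finset.sum_comm]
  simp [mul_comm]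

lemma vecE_add (A B : Matrix ι κ ℂ) : vecE (A + B) = vecE A + vecE B := rfl
lemma vecE_sub (A B : Matrix ι κ ℂ) : vecE (A - B) = vecE A - vecE B := rfl

lemma frobNorm_eq_norm (A : Matrix ι κ ℂ) : frobNorm A = ‖vecE A‖ := by
  rw [frobNorm, norm_eq_sqrt_re_inner (𝕜 := ℂ), inner_vecE]; rfl

lemma frobNorm_nonneg (A : Matrix ι κ ℂ) : 0 ≤ frobNorm A := by
  rw [frobNorm_eq_norm]; positivity

lemma trace_conjTranspose_mul_self_re_nonneg (A : Matrix ι κ ℂ) : 0 ≤ ((Aᴴ * A).trace).re := by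
  have := inner_self_nonneg (𝕜 := ℂ) (x := vecE A)
  rwa [inner_vecE] at this

lemma frobNorm_sq (A : Matrix ι κ ℂ) : frobNorm A ^ 2 = ((Aᴴ * A).trace).re := by
  rw [frobNorm, Real.sq_sqrt (trace_conjTranspose_mul_self_re_nonneg A)]

lemma re_trace_conjTranspose_mul_le (A B : Matrix ι κ ℂ) :
    ((Aᴴ * B).trace).re ≤ frobNorm A * frobNorm B := by
  rw [frobNorm_eq_norm, frobNorm_eq_norm]
  have := re_inner_le_norm (𝕜 := ℂ) (vecE A) (vecE B)
  rwa [inner_vecE] at this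

lemma frobNorm_triangle (A B : Matrix ι κ ℂ) :
    frobNorm (A + B) ≤ frobNorm A + frobNorm B := by
  simp only [frobNorm_eq_norm, vecE_add]; exact norm_add_le _ _

lemma frobNorm_eq_of_trace_eq {A B : Matrix ι κ ℂ} (h : (Aᴴ * A).trace = (Bᴴ * B).trace) :
    frobNorm A = frobNorm B := by rw [frobNorm, frobNorm, h]


variable {ι : Type*} [Fintype ι] [DecidableEq ι]

lemma sqrt_congr {A B : Matrix ι ι ℂ} (hA : A.PosSemidef) (hB : B.PosSemidef) (h : A = B) :
    hA.sqrt = hB.sqrt := by subst h; rfl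


lemma trace_re_nonneg {A : Matrix ι ι ℂ} (hA : A.PosSemidef) : 0 ≤ A.trace.re := by
  have := trace_conjTranspose_mul_self_re_nonneg hA.sqrt
  rwa [hA.posSemidef_sqrt.1, hA.sqrt_mul_self] at this

lemma posDef_of_isUnit {A : Matrix ι ι ℂ} (hA : A.PosSemidef) (h : IsUnit A.det) : A.PosDef := by
  refine posDef_iff_dotProduct_mulVec.mpr ⟨hA.1, fun x hx => lt_of_le_of_ne (hA.dotProduct_mulVec_nonneg x) ?_⟩
  intro h0
  have hBx : hA.sqrt *ᵥ x = 0 := by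
    have h1 : dotProduct (star (hA.sqrt *ᵥ x)) (hA.sqrt *ᵥ x) = 0 := by
      rw [star_mulVec, ← dotProduct_mulVec, mulVec_mulVec, hA.posSemidef_sqrt.1,
        hA.sqrt_mul_self, ← h0]
    exact dotProduct_star_self_eq_zero.mp h1
  have hAx : A *ᵥ x = 0 := by
    rw [← hA.sqrt_mul_self, ← mulVec_mulVec, hBx, mulVec_zero]
  apply hx
  calc x = (A⁻¹ * A) *ᵥ x := by rw [nonsing_inv_mul A h, one_mulVec]
  _ = A⁻¹ *ᵥ (A *ᵥ x) := by rw [mulVec_mulVec]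
  _ = 0 := by rw [hAx, mulVec_zero]

lemma PosDef.sqrt_posDef {A : Matrix ι ι ℂ} (hA : A.PosDef) : hA.posSemidef.sqrt.PosDef := by
  apply posDef_of_isUnit hA.posSemidef.posSemidef_sqrt
  have : IsUnit (hA.posSemidef.sqrt.det * hA.posSemidef.sqrt.det) := by
    rw [← det_mul, hA.posSemidef.sqrt_mul_self]; exact hA.isUnit.map detMonoidHom
  exact isUnit_of_mul_isUnit_left this

lemma sqrt_inv {Y : Matrix ι ι ℂ} (hY : Y.PosDef) :
    (hY.inv.posSemidef).sqrt = (hY.posSemidef.sqrt)⁻¹ := by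
  symm
  apply Matrix.PosSemidef.eq_sqrt_of_sq_eq (hY.posSemidef.posSemidef_sqrt.inv)
  rw [pow_two, ← Matrix.mul_inv_rev, hY.posSemidef.sqrt_mul_self]

lemma smul_one_posDef {δ : ℝ} (hδ : 0 < δ) : ((δ : ℂ) • (1 : Matrix ι ι ℂ)).PosDef := by
  rw [Matrix.smul_one_eq_diagonal]
  rw [Matrix.posDef_diagonal_iff]
  intro i
  exact_mod_cast hδ


variable {ι : Type*} [Fintype ι] [DecidableEq ι]

lemma exists_polar (M : Matrix ι ι ℂ) :
    ∃ U ∈ Matrix.unitaryGroup ι ℂ,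
      M = U * (Matrix.posSemidef_conjTranspose_mul_self M).sqrt := by
  classical
  set hH := Matrix.posSemidef_conjTranspose_mul_self M with hHdef
  have hHer : (Mᴴ * M).IsHermitian := hH.1
  set V : Matrix ι ι ℂ := (hHer.eigenvectorUnitary : Matrix ι ι ℂ) with hVdef
  set d : ι → ℝ := hHer.eigenvalues with hddef
  have hd0 : ∀ i, 0 ≤ d i := fun i => hH.eigenvalues_nonneg i
  have hVmem : V ∈ Matrix.unitaryGroup ι ℂ := hHer.eigenvectorUnitary.2
  have hVV : star V * V = 1 := (Matrix.mem_unitaryGroup_iff').mp hVmem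
  have hVV' : V * star V = 1 := (Matrix.mem_unitaryGroup_iff).mp hVmem
  have hspec : Mᴴ * M = V * Matrix.diagonal (fun i => (d i : ℂ)) * star V := by
    have := hHer.spectral_theorem
    rw [Unitary.conjStarAlgAut_apply] at this
    exact this
  set N : Matrix ι ι ℂ := M * V with hNdef
  have hNN : Nᴴ * N = Matrix.diagonal (fun i => (d i : ℂ)) := by
    have h : Nᴴ * N = star V * (Mᴴ * M) * V := by
      rw [hNdef, conjTranspose_mul, Matrix.star_eq_conjTranspose]
      noncomm_ring
    rw [h, hspec]
    calc star V * (V * Matrix.diagonal (fun i => (d i : ℂ)) * star V) * V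
        = (star V * V) * Matrix.diagonal (fun i => (d i : ℂ)) * (star V * V) := by noncomm_ring
      _ = _ := by rw [hVV, one_mul, mul_one]
  have hcol : ∀ i, (∑ j, Complex.normSq (N j i)) = d i := by
    intro i
    have h1 : (Nᴴ * N) i i = (d i : ℂ) := by rw [hNN]; simp
    have h2 : (Nᴴ * N) i i = ∑ j, (Complex.normSq (N j i) : ℂ) := by
      simp only [Matrix.mul_apply, Matrix.conjTranspose_apply]
      congr 1; ext j
      rw [Complex.normSq_eq_conj_mul_self]; rfl
    rw [h2] at h1
    exact_mod_cast h1
  set s : Set ι := {i | d i ≠ 0} with hsdef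
  set w : ι → EuclideanSpace ℂ ι := fun i => WithLp.toLp 2 (fun j => ((Real.sqrt (d i) : ℂ))⁻¹ * N j i) with hwdef
  have hinnerw : ∀ i k, ⟪w i, w k⟫_ℂ =
      ((Real.sqrt (d i) : ℂ))⁻¹ * ((Real.sqrt (d k) : ℂ))⁻¹ * ((Nᴴ * N) i k) := by
    intro i k
    simp only [PiLp.inner_apply, RCLike.inner_apply, hwdef, Matrix.mul_apply,
      Matrix.conjTranspose_apply, WithLp.ofLp_toLp]
    rw [Finset.mul_sum]
    apply Finset.sum_congr rfl
    intro j _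
    simp only [_root_.map_mul, map_inv₀, Complex.conj_ofReal, Complex.star_def]
    ring
  have horth : Orthonormal ℂ (s.restrict w) := by
    rw [orthonormal_iff_ite]
    rintro ⟨i, hi⟩ ⟨k, hk⟩
    show ⟪w i, w k⟫_ℂ = _
    rw [hinnerw, hNN]
    by_cases h : i = k
    · subst h
      rw [Matrix.diagonal_apply_eq, if_pos (show (⟨i,hi⟩ : s) = ⟨i,hk⟩ from rfl)]
      have hdi : 0 < d i := lt_of_le_of_ne (hd0 i) (Ne.symm hi)
      have hne : ((Real.sqrt (d i) : ℂ)) ≠ 0 := by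
        simp only [ne_eq, Complex.ofReal_eq_zero]
        positivity
      field_simp
      rw [← Complex.ofReal_pow, Real.sq_sqrt (hd0 i)]
    · rw [Matrix.diagonal_apply_ne _ h, if_neg (by simpa using h)]
      ring
  obtain ⟨b, hb⟩ := horth.exists_orthonormalBasis_extension_of_card_eq
    (by simp)
  set W : Matrix ι ι ℂ := Matrix.of (fun j i => b i j) with hWdef
  have hWmem : W ∈ Matrix.unitaryGroup ι ℂ := by
    rw [Matrix.mem_unitaryGroup_iff']
    ext i k
    have hip := (orthonormal_iff_ite.mp b.orthonormal) i k
    simp only [PiLp.inner_apply, RCLike.inner_apply, starRingEnd_apply] at hip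
    simp only [Matrix.mul_apply, Matrix.one_apply, hWdef, Matrix.star_apply, Matrix.of_apply]
    rw [← hip]; exact Finset.sum_congr rfl (fun _ _ => mul_comm _ _)
  have hNW : N = W * Matrix.diagonal (fun i => ((Real.sqrt (d i) : ℂ))) := by
    ext j i
    rw [Matrix.mul_diagonal]
    by_cases hi : i ∈ s
    · have hdi : 0 < d i := lt_of_le_of_ne (hd0 i) (Ne.symm hi)
      have hne : ((Real.sqrt (d i) : ℂ)) ≠ 0 := by
        simp only [ne_eq, Complex.ofReal_eq_zero]; positivity
      have : W j i = ((Real.sqrt (d i) : ℂ))⁻¹ * N j i := by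
        simp only [hWdef, Matrix.of_apply]
        rw [hb i hi]
      rw [this]
      field_simp
    · have hdi : d i = 0 := by simpa [hsdef] using hi
      have hNji : N j i = 0 := by
        have hsum := hcol i
        rw [hdi] at hsum
        have := (Finset.sum_eq_zero_iff_of_nonneg
          (fun k _ => Complex.normSq_nonneg (N k i))).mp hsum j (Finset.mem_univ j)
        exact Complex.normSq_eq_zero.mp this
      rw [hNji, hdi]
      simp
  have hsqrt : hH.sqrt = V * Matrix.diagonal (fun i => ((Real.sqrt (d i) : ℂ))) * star V := by
    symm
    apply Matrix.PosSemidef.eq_sqrt_of_sq_eq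
    · rw [Matrix.star_eq_conjTranspose]
      apply Matrix.PosSemidef.mul_mul_conjTranspose_same
      apply Matrix.PosSemidef.diagonal
      intro i
      exact Complex.zero_le_real.mpr (by positivity)
    · rw [pow_two]
      calc (V * Matrix.diagonal (fun i => ((Real.sqrt (d i) : ℂ))) * star V) *
            (V * Matrix.diagonal (fun i => ((Real.sqrt (d i) : ℂ))) * star V)
          = V * (Matrix.diagonal (fun i => ((Real.sqrt (d i) : ℂ))) * (star V * V) *
              Matrix.diagonal (fun i => ((Real.sqrt (d i) : ℂ)))) * star V := by noncomm_ring
        _ = V * Matrix.diagonal (fun i => (d i : ℂ)) * star V := by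
            rw [hVV, mul_one, Matrix.diagonal_mul_diagonal]
            have hsq2 : Matrix.diagonal (fun i => ((Real.sqrt (d i) : ℂ)) * ((Real.sqrt (d i) : ℂ)))
                = Matrix.diagonal (fun i => ((d i : ℂ))) := by
              apply congrArg Matrix.diagonal
              funext i
              rw [← Complex.ofReal_mul, Real.mul_self_sqrt (hd0 i)]
            rw [hsq2]
        _ = Mᴴ * M := hspec.symm
  refine ⟨W * star V, mul_mem hWmem (Unitary.star_mem hVmem), ?_⟩
  rw [hsqrt]
  calc M = N * star V := by rw [hNdef, mul_assoc, hVV', mul_one]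
    _ = W * Matrix.diagonal (fun i => ((Real.sqrt (d i) : ℂ))) * star V := by rw [hNW]
    _ = W * star V * (V * Matrix.diagonal (fun i => ((Real.sqrt (d i) : ℂ))) * star V) := by
        rw [show W * star V * (V * Matrix.diagonal (fun i => ((Real.sqrt (d i) : ℂ))) * star V)
          = W * (star V * V) * Matrix.diagonal (fun i => ((Real.sqrt (d i) : ℂ))) * star V by
            noncomm_ring, hVV, mul_one]


variable {ι : Type*} [Fintype ι] [DecidableEq ι]


lemma traceNorm_nonneg (M : Matrix ι ι ℂ) : 0 ≤ traceNorm M :=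
  trace_re_nonneg (Matrix.posSemidef_conjTranspose_mul_self M).posSemidef_sqrt

lemma frobNorm_conjTranspose (A : Matrix ι ι ℂ) : frobNorm Aᴴ = frobNorm A := by
  apply frobNorm_eq_of_trace_eq
  rw [conjTranspose_conjTranspose, Matrix.trace_mul_comm]

/-- key: for any unitary `V`, `re Tr (V M) ≤ ‖M‖₁`. -/
lemma re_trace_unitary_mul_le (M : Matrix ι ι ℂ) {V : Matrix ι ι ℂ}
    (hV : V ∈ Matrix.unitaryGroup ι ℂ) : ((V * M).trace).re ≤ traceNorm M := by
  obtain ⟨U, hU, hM⟩ := exists_polar M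
  set H := (Matrix.posSemidef_conjTranspose_mul_self M).sqrt with hHdef
  have hHpsd : H.PosSemidef := (Matrix.posSemidef_conjTranspose_mul_self M).posSemidef_sqrt
  set G := hHpsd.sqrt with hGdef
  have hGpsd : G.PosSemidef := hHpsd.posSemidef_sqrt
  have hGH : Gᴴ = G := hGpsd.1
  have hGG : G * G = H := hHpsd.sqrt_mul_self
  set W := V * U with hWdef
  have hWmem : W ∈ Matrix.unitaryGroup ι ℂ := mul_mem hV hU
  have hWW : W * star W = 1 := (Matrix.mem_unitaryGroup_iff).mp hWmem
  have hWW' : star W * W = 1 := (Matrix.mem_unitaryGroup_iff').mp hWmem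
  have h1 : V * M = W * H := by rw [hM, hWdef, mul_assoc]
  have h2 : W * H = (G * star W)ᴴ * G := by
    rw [← hGG, conjTranspose_mul, Matrix.star_eq_conjTranspose, conjTranspose_conjTranspose, hGH]
    noncomm_ring
  have h3 : ((V * M).trace).re ≤ frobNorm (G * star W) * frobNorm G := by
    rw [h1, h2]
    exact re_trace_conjTranspose_mul_le _ _
  have h4 : frobNorm (G * star W) = frobNorm G := by
    apply frobNorm_eq_of_trace_eq
    rw [conjTranspose_mul, Matrix.star_eq_conjTranspose, conjTranspose_conjTranspose]
    calc (W * Gᴴ * (G * Wᴴ)).trace = (W * (Gᴴ * G) * Wᴴ).trace := by noncomm_ring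
      _ = (Wᴴ * W * (Gᴴ * G)).trace := by
          rw [Matrix.trace_mul_cycle]
      _ = (Gᴴ * G).trace := by
          rw [← Matrix.star_eq_conjTranspose, hWW', one_mul]
  have h5 : frobNorm G * frobNorm G = traceNorm M := by
    have := frobNorm_sq G
    rw [pow_two] at this
    rw [this, hGH, hGG, hHdef]
    rfl
  calc ((V * M).trace).re ≤ frobNorm (G * star W) * frobNorm G := h3
    _ = frobNorm G * frobNorm G := by rw [h4]
    _ = traceNorm M := h5

lemma exists_unitary_re_trace_eq (M : Matrix ι ι ℂ) :
    ∃ U ∈ Matrix.unitaryGroup ι ℂ, ((U * M).trace).re = traceNorm M := by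
  obtain ⟨U, hU, hM⟩ := exists_polar M
  refine ⟨star U, Unitary.star_mem hU, ?_⟩
  conv_lhs => rw [hM, ← mul_assoc, (Matrix.mem_unitaryGroup_iff').mp hU, one_mul]
  rfl

lemma traceNorm_triangle (A B : Matrix ι ι ℂ) :
    traceNorm (A + B) ≤ traceNorm A + traceNorm B := by
  obtain ⟨U, hU, hEq⟩ := exists_unitary_re_trace_eq (A + B)
  rw [← hEq, Matrix.mul_add, Matrix.trace_add, Complex.add_re]
  exact add_le_add (re_trace_unitary_mul_le A hU) (re_trace_unitary_mul_le B hU)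

lemma traceNorm_mul_le (A B : Matrix ι ι ℂ) :
    traceNorm (A * B) ≤ frobNorm A * frobNorm B := by
  obtain ⟨U, hU, hEq⟩ := exists_unitary_re_trace_eq (A * B)
  have h1 : U * (A * B) = (Aᴴ * star U)ᴴ * B := by
    rw [conjTranspose_mul, conjTranspose_conjTranspose, Matrix.star_eq_conjTranspose,
      conjTranspose_conjTranspose, mul_assoc]
  have h2 : frobNorm (Aᴴ * star U) = frobNorm A := by
    rw [← frobNorm_conjTranspose A]
    apply frobNorm_eq_of_trace_eq
    have hUU : star U * U = 1 := (Matrix.mem_unitaryGroup_iff').mp hU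
    have e1 : (Aᴴ * star U)ᴴ * (Aᴴ * star U) = U * (A * Aᴴ) * star U := by
      simp only [conjTranspose_mul, Matrix.star_eq_conjTranspose, conjTranspose_conjTranspose]
      noncomm_ring
    rw [e1, Matrix.trace_mul_cycle, hUU, one_mul, conjTranspose_conjTranspose]
  calc traceNorm (A * B) = ((U * (A * B)).trace).re := hEq.symm
    _ = (((Aᴴ * star U)ᴴ * B).trace).re := by rw [h1]
    _ ≤ frobNorm (Aᴴ * star U) * frobNorm B := re_trace_conjTranspose_mul_le _ _
    _ = frobNorm A * frobNorm B := by rw [h2]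

lemma traceNorm_conjTranspose (A : Matrix ι ι ℂ) : traceNorm Aᴴ = traceNorm A := by
  have key : ∀ B : Matrix ι ι ℂ, traceNorm Bᴴ ≤ traceNorm B := by
    intro B
    obtain ⟨U, hU, hEq⟩ := exists_unitary_re_trace_eq Bᴴ
    rw [← hEq]
    have h1 : U * Bᴴ = (B * Uᴴ)ᴴ := by
      rw [conjTranspose_mul, conjTranspose_conjTranspose]
    rw [h1, Matrix.trace_conjTranspose]
    have h2 : (star ((B * Uᴴ).trace)).re = ((B * Uᴴ).trace).re := by
      exact Complex.conj_re _
    rw [h2, Matrix.trace_mul_comm]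
    exact re_trace_unitary_mul_le B
      (by rw [← Matrix.star_eq_conjTranspose]; exact Unitary.star_mem hU)
  refine le_antisymm (key A) ?_
  have := key Aᴴ
  rwa [conjTranspose_conjTranspose] at this

lemma traceNorm_psd {P : Matrix ι ι ℂ} (hP : P.PosSemidef) : traceNorm P = P.trace.re := by
  have h : (Matrix.posSemidef_conjTranspose_mul_self P).sqrt = P := by
    symm
    exact hP.eq_sqrt_of_sq_eq _ (by rw [pow_two, hP.1])
  rw [traceNorm, ← Matrix.PosSemidef.sqrt, h]


variable {ι : Type*} [Fintype ι] [DecidableEq ι]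


lemma fid_eq {P Q : Matrix ι ι ℂ} (hP : P.PosSemidef) (hQ : Q.PosSemidef) :
    fid P Q = traceNorm (hP.sqrt * hQ.sqrt) := by
  rw [fid, msqrt, msqrt, dif_pos hP, dif_pos hQ]; rfl

lemma isUnit_det_of_posDef {Y : Matrix ι ι ℂ} (hY : Y.PosDef) : IsUnit Y.det :=
  (Matrix.isUnit_iff_isUnit_det Y).mp hY.isUnit

/-- Lower bound: the fidelity is at most the SDP objective value. -/
lemma fid_le_obj {P Q Y : Matrix ι ι ℂ} (hP : P.PosSemidef) (hQ : Q.PosSemidef)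
    (hY : Y.PosDef) :
    fid P Q ≤ ((P * Y).trace).re / 2 + ((Q * Y⁻¹).trace).re / 2 := by
  set R := hY.posSemidef.sqrt with hRdef
  have hRpsd : R.PosSemidef := hY.posSemidef.posSemidef_sqrt
  have hRH : Rᴴ = R := hRpsd.1
  have hRR : R * R = Y := hY.posSemidef.sqrt_mul_self
  have hRdet : IsUnit R.det := isUnit_det_of_posDef (PosDef.sqrt_posDef hY)
  have hRRinv : R * R⁻¹ = 1 := Matrix.mul_nonsing_inv R hRdet
  have hRinvH : (R⁻¹)ᴴ = R⁻¹ := (Matrix.IsHermitian.inv hRH)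
  have hfact : hP.sqrt * hQ.sqrt = (hP.sqrt * R) * (R⁻¹ * hQ.sqrt) := by
    rw [show (hP.sqrt * R) * (R⁻¹ * hQ.sqrt) = hP.sqrt * (R * R⁻¹) * hQ.sqrt by noncomm_ring,
      hRRinv, mul_one]
  have hPH : (hP.sqrt)ᴴ = hP.sqrt := hP.posSemidef_sqrt.1
  have hQH : (hQ.sqrt)ᴴ = hQ.sqrt := hQ.posSemidef_sqrt.1
  have hfa : frobNorm (hP.sqrt * R) ^ 2 = ((P * Y).trace).re := by
    rw [frobNorm_sq]
    congr 1
    have e : (hP.sqrt * R)ᴴ * (hP.sqrt * R) = R * (hP.sqrt * hP.sqrt) * R := by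
      simp only [conjTranspose_mul, hRH, hPH]
      noncomm_ring
    rw [e, hP.sqrt_mul_self, Matrix.trace_mul_cycle, hRR, Matrix.trace_mul_comm]
  have hfb : frobNorm (R⁻¹ * hQ.sqrt) ^ 2 = ((Q * Y⁻¹).trace).re := by
    rw [frobNorm_sq]
    congr 1
    have e : (R⁻¹ * hQ.sqrt)ᴴ * (R⁻¹ * hQ.sqrt) = hQ.sqrt * (R⁻¹ * R⁻¹) * hQ.sqrt := by
      simp only [conjTranspose_mul, hRinvH, hQH]
      noncomm_ring
    have hinv : R⁻¹ * R⁻¹ = Y⁻¹ := by rw [← hRR, Matrix.mul_inv_rev]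
    rw [e, hinv, Matrix.trace_mul_cycle, hQ.sqrt_mul_self, Matrix.trace_mul_comm]
  have hCS : fid P Q ≤ frobNorm (hP.sqrt * R) * frobNorm (R⁻¹ * hQ.sqrt) := by
    rw [fid_eq hP hQ, hfact]
    exact traceNorm_mul_le _ _
  have h2 := two_mul_le_add_sq (frobNorm (hP.sqrt * R)) (frobNorm (R⁻¹ * hQ.sqrt))
  rw [hfa, hfb] at *
  linarith [hCS, h2]


variable {ι : Type*} [Fintype ι] [DecidableEq ι]


/-- uniqueness-based description of the sqrt of a unitarily diagonalized PSD matrix -/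
lemma sqrt_unitary_diag {A : Matrix ι ι ℂ} (hA : A.PosSemidef) {V : Matrix ι ι ℂ}
    (hV : V ∈ Matrix.unitaryGroup ι ℂ) {f : ι → ℝ} (hf : ∀ i, 0 ≤ f i)
    (hAf : A = V * Matrix.diagonal (fun i => ((f i : ℂ))) * star V) :
    hA.sqrt = V * Matrix.diagonal (fun i => ((Real.sqrt (f i) : ℂ))) * star V := by
  have hVV : star V * V = 1 := (Matrix.mem_unitaryGroup_iff').mp hV
  symm
  apply Matrix.PosSemidef.eq_sqrt_of_sq_eq
  · rw [Matrix.star_eq_conjTranspose]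
    apply Matrix.PosSemidef.mul_mul_conjTranspose_same
    apply Matrix.PosSemidef.diagonal
    intro i
    exact Complex.zero_le_real.mpr (by positivity)
  · rw [pow_two]
    calc (V * Matrix.diagonal (fun i => ((Real.sqrt (f i) : ℂ))) * star V) *
          (V * Matrix.diagonal (fun i => ((Real.sqrt (f i) : ℂ))) * star V)
        = V * (Matrix.diagonal (fun i => ((Real.sqrt (f i) : ℂ))) * (star V * V) *
            Matrix.diagonal (fun i => ((Real.sqrt (f i) : ℂ)))) * star V := by noncomm_ring
      _ = A := by
          rw [hVV, mul_one, Matrix.diagonal_mul_diagonal]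
          have hsq2 : Matrix.diagonal (fun i => ((Real.sqrt (f i) : ℂ)) * ((Real.sqrt (f i) : ℂ)))
              = Matrix.diagonal (fun i => ((f i : ℂ))) := by
            apply congrArg Matrix.diagonal
            funext i
            rw [← Complex.ofReal_mul, Real.mul_self_sqrt (hf i)]
          rw [hsq2, ← hAf]

lemma frob_unitary_conj (A : Matrix ι ι ℂ) {V : Matrix ι ι ℂ}
    (hV : V ∈ Matrix.unitaryGroup ι ℂ) :
    frobNorm (V * A * star V) = frobNorm A := by
  have hVV : star V * V = 1 := (Matrix.mem_unitaryGroup_iff').mp hV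
  have hVV' : V * star V = 1 := (Matrix.mem_unitaryGroup_iff).mp hV
  apply frobNorm_eq_of_trace_eq
  have eH : (V * A * star V)ᴴ = V * Aᴴ * star V := by
    simp only [Matrix.star_eq_conjTranspose, conjTranspose_mul, conjTranspose_conjTranspose]
    rw [mul_assoc]
  have e : (V * A * star V)ᴴ * (V * A * star V) = V * (Aᴴ * A) * star V := by
    rw [eH]
    calc V * Aᴴ * star V * (V * A * star V)
        = V * (Aᴴ * (star V * V) * A) * star V := by noncomm_ring
      _ = _ := by rw [hVV]; noncomm_ring
  rw [e, Matrix.trace_mul_cycle, hVV, one_mul]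

lemma frobNorm_diag_le {g : ι → ℝ} {c : ℝ} (hc : 0 ≤ c) (hg : ∀ i, g i ^ 2 ≤ c) :
    frobNorm (Matrix.diagonal (fun i => ((g i : ℂ)))) ≤ Real.sqrt (Fintype.card ι * c) := by
  rw [frobNorm]
  apply Real.sqrt_le_sqrt
  have e : ((Matrix.diagonal (fun i => ((g i : ℂ))))ᴴ *
      Matrix.diagonal (fun i => ((g i : ℂ)))).trace = ((∑ i, g i ^ 2 : ℝ) : ℂ) := by
    rw [Matrix.diagonal_conjTranspose, Matrix.diagonal_mul_diagonal, Matrix.trace_diagonal]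
    push_cast
    apply Finset.sum_congr rfl
    intro i _
    simp [Pi.star_apply, Complex.star_def, Complex.conj_ofReal, pow_two]
  rw [e]
  rw [Complex.ofReal_re]
  calc (∑ i, g i ^ 2) ≤ ∑ _i : ι, c := Finset.sum_le_sum (fun i _ => hg i)
    _ = Fintype.card ι * c := by rw [Finset.sum_const, Finset.card_univ, nsmul_eq_mul]

lemma sqrt_add_le_sqrt_add_sqrt {a b : ℝ} (ha : 0 ≤ a) (hb : 0 ≤ b) :
    Real.sqrt (a + b) ≤ Real.sqrt a + Real.sqrt b := by
  rw [show a + b = Real.sqrt a ^ 2 + Real.sqrt b ^ 2 by rw [Real.sq_sqrt ha, Real.sq_sqrt hb]]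
  have h1 : Real.sqrt a ^ 2 + Real.sqrt b ^ 2 ≤ (Real.sqrt a + Real.sqrt b) ^ 2 := by
    nlinarith [Real.sqrt_nonneg a, Real.sqrt_nonneg b]
  calc Real.sqrt (Real.sqrt a ^ 2 + Real.sqrt b ^ 2) ≤
      Real.sqrt ((Real.sqrt a + Real.sqrt b) ^ 2) := Real.sqrt_le_sqrt h1
    _ = Real.sqrt a + Real.sqrt b := by
        rw [Real.sqrt_sq (by positivity)]

/-- the PSD square root moves at most `√(nδ)` in Frobenius norm under `+ δ•1`. -/
lemma sqrt_shift {P : Matrix ι ι ℂ} (hP : P.PosSemidef) {δ : ℝ} (hδ : 0 < δ)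
    (hPδ : (P + (δ : ℂ) • (1 : Matrix ι ι ℂ)).PosSemidef) :
    frobNorm (hPδ.sqrt - hP.sqrt) ≤ Real.sqrt (Fintype.card ι * δ) := by
  set V : Matrix ι ι ℂ := (hP.1.eigenvectorUnitary : Matrix ι ι ℂ) with hVdef
  set d : ι → ℝ := hP.1.eigenvalues with hddef
  have hd0 : ∀ i, 0 ≤ d i := fun i => hP.eigenvalues_nonneg i
  have hVmem : V ∈ Matrix.unitaryGroup ι ℂ := hP.1.eigenvectorUnitary.2
  have hVV : star V * V = 1 := (Matrix.mem_unitaryGroup_iff').mp hVmem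
  have hVV' : V * star V = 1 := (Matrix.mem_unitaryGroup_iff).mp hVmem
  have hspec : P = V * Matrix.diagonal (fun i => ((d i : ℂ))) * star V := by
    have := hP.1.spectral_theorem
    rw [Unitary.conjStarAlgAut_apply] at this
    exact this
  have hspecδ : P + (δ : ℂ) • (1 : Matrix ι ι ℂ)
      = V * Matrix.diagonal (fun i => ((d i + δ : ℝ) : ℂ)) * star V := by
    have e1 : Matrix.diagonal (fun i => ((d i + δ : ℝ) : ℂ))
        = Matrix.diagonal (fun i => ((d i : ℂ))) + (δ : ℂ) • (1 : Matrix ι ι ℂ) := by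
      rw [Matrix.smul_one_eq_diagonal, Matrix.diagonal_add]
      push_cast
      rfl
    rw [e1, Matrix.mul_add, Matrix.add_mul, ← hspec]
    congr 1
    rw [Matrix.mul_smul, Matrix.mul_one, Matrix.smul_mul, hVV']
  have h1 : hP.sqrt = V * Matrix.diagonal (fun i => ((Real.sqrt (d i) : ℂ))) * star V :=
    sqrt_unitary_diag hP hVmem hd0 hspec
  have h2 : hPδ.sqrt = V * Matrix.diagonal (fun i => ((Real.sqrt (d i + δ) : ℂ))) * star V :=
    sqrt_unitary_diag hPδ hVmem (fun i => add_nonneg (hd0 i) (le_of_lt hδ)) hspecδ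
  have hdiff : hPδ.sqrt - hP.sqrt
      = V * Matrix.diagonal (fun i => ((Real.sqrt (d i + δ) - Real.sqrt (d i) : ℝ) : ℂ)) * star V := by
    rw [h1, h2, ← Matrix.sub_mul, ← Matrix.mul_sub, Matrix.diagonal_sub]
    push_cast
    rfl
  rw [hdiff, frob_unitary_conj _ hVmem]
  apply frobNorm_diag_le (le_of_lt hδ)
  intro i
  have hle : Real.sqrt (d i + δ) - Real.sqrt (d i) ≤ Real.sqrt δ := by
    have := sqrt_add_le_sqrt_add_sqrt (hd0 i) (le_of_lt hδ)
    linarith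
  have hge : 0 ≤ Real.sqrt (d i + δ) - Real.sqrt (d i) := by
    have : Real.sqrt (d i) ≤ Real.sqrt (d i + δ) := Real.sqrt_le_sqrt (by linarith)
    linarith
  nlinarith [Real.sq_sqrt (le_of_lt hδ), Real.sqrt_nonneg δ]


variable {ι : Type*} [Fintype ι] [DecidableEq ι]


/-- Upper bound: an explicit near-optimal feasible `Y`. -/
lemma exists_obj_le {P Q : Matrix ι ι ℂ} (hP : P.PosSemidef) (hQ : Q.PosSemidef)
    {δ : ℝ} (hδ : 0 < δ) :
    ∃ Y : Matrix ι ι ℂ, Y.PosDef ∧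
      ((Pᴴ * Y).trace).re / 2 + ((Qᴴ * Y⁻¹).trace).re / 2 ≤ fid P Q +
        (Real.sqrt (Fintype.card ι * δ) * (frobNorm hQ.sqrt + Real.sqrt (Fintype.card ι * δ))
          + frobNorm hP.sqrt * Real.sqrt (Fintype.card ι * δ)) := by
  have hPδ : (P + (δ : ℂ) • (1 : Matrix ι ι ℂ)).PosDef := Matrix.PosDef.posSemidef_add hP (smul_one_posDef hδ)
  have hQδ : (Q + (δ : ℂ) • (1 : Matrix ι ι ℂ)).PosDef := Matrix.PosDef.posSemidef_add hQ (smul_one_posDef hδ)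
  set A := hPδ.posSemidef.sqrt with hAdef
  set B := hQδ.posSemidef.sqrt with hBdef
  have hApd : A.PosDef := PosDef.sqrt_posDef hPδ
  have hBpd : B.PosDef := PosDef.sqrt_posDef hQδ
  have hAH : Aᴴ = A := hApd.isHermitian
  have hBH : Bᴴ = B := hBpd.isHermitian
  have hAA : A * A = P + (δ : ℂ) • 1 := hPδ.posSemidef.sqrt_mul_self
  have hBB : B * B = Q + (δ : ℂ) • 1 := hQδ.posSemidef.sqrt_mul_self
  have hAdet : IsUnit A.det := isUnit_det_of_posDef hApd
  have hAAinv : A * A⁻¹ = 1 := Matrix.mul_nonsing_inv A hAdet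
  have hAinvA : A⁻¹ * A = 1 := Matrix.nonsing_inv_mul A hAdet
  have hAinvH : (A⁻¹)ᴴ = A⁻¹ := Matrix.IsHermitian.inv hAH
  -- T := A * Qδ * A = (B * A)ᴴ * (B * A)
  have hTfact : (B * A)ᴴ * (B * A) = A * (Q + (δ : ℂ) • 1) * A := by
    rw [conjTranspose_mul, hAH, hBH, ← hBB]
    noncomm_ring
  set T := A * (Q + (δ : ℂ) • 1) * A with hTdef
  have hTpsd : T.PosSemidef := by
    rw [← hTfact]
    exact Matrix.posSemidef_conjTranspose_mul_self (B * A)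
  have hBAdet : IsUnit (B * A).det := by
    rw [Matrix.det_mul]
    exact (isUnit_det_of_posDef hBpd).mul hAdet
  have hTpd : T.PosDef := by
    apply posDef_of_isUnit hTpsd
    rw [← hTfact, Matrix.det_mul, Matrix.det_conjTranspose]
    exact (hBAdet.map (starRingEnd ℂ)).mul hBAdet
  set S := hTpd.posSemidef.sqrt with hSdef
  have hSpd : S.PosDef := PosDef.sqrt_posDef hTpd
  have hSdet : IsUnit S.det := isUnit_det_of_posDef hSpd
  have hSS : S * S = T := hTpd.posSemidef.sqrt_mul_self
  have hSH : Sᴴ = S := hSpd.isHermitian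
  set Y := A⁻¹ * S * A⁻¹ with hYdef
  have hYpsd : Y.PosSemidef := by
    have := hSpd.posSemidef.conjTranspose_mul_mul_same (A⁻¹)
    rwa [hAinvH] at this
  have hYdet : IsUnit Y.det := by
    rw [hYdef, Matrix.det_mul, Matrix.det_mul]
    have h1 : IsUnit A⁻¹.det := Matrix.isUnit_nonsing_inv_det A hAdet
    exact (h1.mul hSdet).mul h1
  have hYpd : Y.PosDef := posDef_of_isUnit hYpsd hYdet
  have hYinv : Y⁻¹ = A * S⁻¹ * A := by
    rw [hYdef, Matrix.mul_inv_rev, Matrix.mul_inv_rev,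
      Matrix.nonsing_inv_nonsing_inv A hAdet, mul_assoc]
  refine ⟨Y, hYpd, ?_⟩
  -- tr(P Y) ≤ tr S
  have key1 : ((Pᴴ * Y).trace).re ≤ S.trace.re := by
    rw [hP.1]
    have hsplit : ((P + (δ : ℂ) • 1) * Y).trace = (P * Y).trace + ((δ : ℂ) • Y).trace := by
      rw [Matrix.add_mul, Matrix.trace_add, Matrix.smul_mul, Matrix.one_mul]
    have hδY : 0 ≤ (((δ : ℂ) • Y).trace).re := by
      rw [Matrix.trace_smul, smul_eq_mul, Complex.re_ofReal_mul]
      exact mul_nonneg (le_of_lt hδ) (trace_re_nonneg hYpd.posSemidef)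
    have hPδY : ((P + (δ : ℂ) • 1) * Y).trace = S.trace := by
      rw [← hAA, hYdef]
      rw [show A * A * (A⁻¹ * S * A⁻¹) = A * (A * A⁻¹) * S * A⁻¹ by noncomm_ring, hAAinv,
        mul_one, Matrix.trace_mul_cycle, hAinvA, one_mul]
    have := congrArg Complex.re hsplit
    rw [hPδY] at hsplit
    have : (P * Y).trace.re = S.trace.re - (((δ : ℂ) • Y).trace).re := by
      have := congrArg Complex.re hsplit
      simp only [Complex.add_re] at this
      linarith
    rw [this]
    linarith
  -- tr(Q Y⁻¹) ≤ tr S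
  have key2 : ((Qᴴ * Y⁻¹).trace).re ≤ S.trace.re := by
    rw [hQ.1]
    have hsplit : ((Q + (δ : ℂ) • 1) * Y⁻¹).trace = (Q * Y⁻¹).trace + ((δ : ℂ) • Y⁻¹).trace := by
      rw [Matrix.add_mul, Matrix.trace_add, Matrix.smul_mul, Matrix.one_mul]
    have hδY : 0 ≤ (((δ : ℂ) • Y⁻¹).trace).re := by
      rw [Matrix.trace_smul, smul_eq_mul, Complex.re_ofReal_mul]
      exact mul_nonneg (le_of_lt hδ) (trace_re_nonneg hYpd.inv.posSemidef)
    have hQδY : ((Q + (δ : ℂ) • 1) * Y⁻¹).trace = S.trace := by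
      rw [hYinv]
      calc ((Q + (δ : ℂ) • 1) * (A * S⁻¹ * A)).trace
          = (A * (Q + (δ : ℂ) • 1) * A * S⁻¹).trace := by
            rw [show (Q + (δ : ℂ) • 1) * (A * S⁻¹ * A) = (Q + (δ : ℂ) • 1) * A * S⁻¹ * A
              by noncomm_ring, Matrix.trace_mul_cycle, ← mul_assoc]
        _ = (S * S * S⁻¹).trace := by rw [← hTdef, ← hSS]
        _ = (S * (S * S⁻¹)).trace := by rw [mul_assoc]
        _ = S.trace := by rw [Matrix.mul_nonsing_inv S hSdet, mul_one]
    rw [hQδY] at hsplit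
    have : (Q * Y⁻¹).trace.re = S.trace.re - (((δ : ℂ) • Y⁻¹).trace).re := by
      have := congrArg Complex.re hsplit
      simp only [Complex.add_re] at this
      linarith
    rw [this]
    linarith
  -- tr S = traceNorm (B * A)
  have hTrS : S.trace.re = traceNorm (B * A) := by
    rw [traceNorm, ← Matrix.PosSemidef.sqrt,
      sqrt_congr (Matrix.posSemidef_conjTranspose_mul_self (B * A)) hTpd.posSemidef hTfact]
  -- final chain of norm inequalities
  set n2 : ℝ := Real.sqrt (Fintype.card ι * δ) with hn2def
  have hn2 : 0 ≤ n2 := Real.sqrt_nonneg _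
  have hconj : traceNorm (B * A) = traceNorm (A * B) := by
    rw [← traceNorm_conjTranspose (B * A), conjTranspose_mul, hAH, hBH]
  have hsplitAB : A * B = hP.sqrt * hQ.sqrt + ((A - hP.sqrt) * B + hP.sqrt * (B - hQ.sqrt)) := by
    noncomm_ring
  have t1 : traceNorm (A * B) ≤ traceNorm (hP.sqrt * hQ.sqrt)
      + traceNorm ((A - hP.sqrt) * B + hP.sqrt * (B - hQ.sqrt)) := by
    rw [hsplitAB]
    exact traceNorm_triangle _ _
  have t2 : traceNorm ((A - hP.sqrt) * B + hP.sqrt * (B - hQ.sqrt))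
      ≤ traceNorm ((A - hP.sqrt) * B) + traceNorm (hP.sqrt * (B - hQ.sqrt)) :=
    traceNorm_triangle _ _
  have hfa : frobNorm (A - hP.sqrt) ≤ n2 := sqrt_shift hP hδ hPδ.posSemidef
  have hfb : frobNorm (B - hQ.sqrt) ≤ n2 := sqrt_shift hQ hδ hQδ.posSemidef
  have hfB : frobNorm B ≤ frobNorm hQ.sqrt + n2 := by
    have e : B = hQ.sqrt + (B - hQ.sqrt) := by noncomm_ring
    calc frobNorm B = frobNorm (hQ.sqrt + (B - hQ.sqrt)) := by rw [← e]
      _ ≤ frobNorm hQ.sqrt + frobNorm (B - hQ.sqrt) := frobNorm_triangle _ _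
      _ ≤ frobNorm hQ.sqrt + n2 := by linarith
  have t3 : traceNorm ((A - hP.sqrt) * B) ≤ n2 * (frobNorm hQ.sqrt + n2) := by
    calc traceNorm ((A - hP.sqrt) * B) ≤ frobNorm (A - hP.sqrt) * frobNorm B :=
        traceNorm_mul_le _ _
      _ ≤ n2 * (frobNorm hQ.sqrt + n2) := by
          apply mul_le_mul hfa hfB (frobNorm_nonneg _) hn2
  have t4 : traceNorm (hP.sqrt * (B - hQ.sqrt)) ≤ frobNorm hP.sqrt * n2 := by
    calc traceNorm (hP.sqrt * (B - hQ.sqrt)) ≤ frobNorm hP.sqrt * frobNorm (B - hQ.sqrt) :=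
        traceNorm_mul_le _ _
      _ ≤ frobNorm hP.sqrt * n2 := by
          apply mul_le_mul_of_nonneg_left hfb (frobNorm_nonneg _)
  have hfid : traceNorm (hP.sqrt * hQ.sqrt) = fid P Q := (fid_eq hP hQ).symm
  have : S.trace.re ≤ fid P Q + (n2 * (frobNorm hQ.sqrt + n2) + frobNorm hP.sqrt * n2) := by
    rw [hTrS, hconj]
    linarith
  linarith


end Aux

/-- SDP dual characterization of fidelity. -/
theorem stmt2 {n : ℕ} (P Q : Matrix (Fin n) (Fin n) ℂ)
    (hP : P.PosSemidef) (hQ : Q.PosSemidef) :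
    fid P Q = sInf {c : ℝ | ∃ Y : Matrix (Fin n) (Fin n) ℂ, Y.PosDef ∧
      c = ((Pᴴ * Y).trace).re / 2 + ((Qᴴ * Y⁻¹).trace).re / 2} := by
  classical
  set Sset := {c : ℝ | ∃ Y : Matrix (Fin n) (Fin n) ℂ, Y.PosDef ∧
    c = ((Pᴴ * Y).trace).re / 2 + ((Qᴴ * Y⁻¹).trace).re / 2} with hSsetdef
  have hmem : ∀ c ∈ Sset, fid P Q ≤ c := by
    rintro c ⟨Y, hY, rfl⟩
    rw [hP.1, hQ.1]
    exact fid_le_obj hP hQ hY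
  have hne : Sset.Nonempty := ⟨_, ⟨1, Matrix.PosDef.one, rfl⟩⟩
  have hbdd : BddBelow Sset := ⟨fid P Q, hmem⟩
  apply le_antisymm
  · exact le_csInf hne hmem
  · set c1 : ℝ := frobNorm hQ.sqrt with hc1def
    set c2 : ℝ := frobNorm hP.sqrt with hc2def
    set f : ℝ → ℝ := fun δ => fid P Q +
      (Real.sqrt (Fintype.card (Fin n) * δ) * (c1 + Real.sqrt (Fintype.card (Fin n) * δ))
        + c2 * Real.sqrt (Fintype.card (Fin n) * δ)) with hfdef
    have hδbound : ∀ δ : ℝ, 0 < δ → sInf Sset ≤ f δ := by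
      intro δ hδ
      obtain ⟨Y, hY, hle⟩ := exists_obj_le hP hQ hδ
      exact le_trans (csInf_le hbdd ⟨Y, hY, rfl⟩) hle
    have hcont : Continuous f := by
      apply Continuous.add continuous_const
      apply Continuous.add
      · exact (Real.continuous_sqrt.comp (continuous_const.mul continuous_id)).mul
          (continuous_const.add (Real.continuous_sqrt.comp (continuous_const.mul continuous_id)))
      · exact continuous_const.mul (Real.continuous_sqrt.comp (continuous_const.mul continuous_id))
    have hf0 : f 0 = fid P Q := by simp [hfdef]
    have htend : Filter.Tendsto f (nhdsWithin 0 (Set.Ioi (0:ℝ))) (nhds (fid P Q)) := by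
      have := (hcont.tendsto 0).mono_left (nhdsWithin_le_nhds (s := Set.Ioi (0:ℝ)))
      rwa [hf0] at this
    exact ge_of_tendsto htend
      (Filter.eventually_of_mem self_mem_nhdsWithin (fun δ hδ => hδbound δ hδ))
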